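/- Let χ = (χ_0,…,χ_n) be a normalized divisive weight vector and fix 1 ≤ i ≤ n. For 0 ≤ j < i let J_{i,j} ∈ ℤ^n be the vector with entry 1 in position n−j, entry −χ_{n−j}/χ_{n−i} in position n−i when i < n, and all other entries 0 (for i = n, J_{n,j} is the standard basis vector e_{n−j}). Then for all 0 ≤ j < j' < i, the K-theoretic equivariant Euler classes 1 − α^{J_{i,j}} and 1 − α^{J_{i,j'}} are relatively prime in the Laurent polynomial ring S^±_ℤ(α) = ℤ[α_1^{±1},…,α_n^{±1}]. -/

import Mathlib

/-- The exponent vector `J_{i,j} ∈ ℤⁿ` of the one-dimensional summand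
`ρ_{i,j} ≅ α_{n−j}·α_{n−i}^{−χ_{n−j}/χ_{n−i}}`: entry `1` in position `n − j`
(coordinates are numbered `1,…,n`, so position `n − j` is the index `k` with
`k + 1 = n − j`), entry `−χ_{n−j}/χ_{n−i}` in position `n − i` when `i < n`
(if `i = n` then `n − i = 0` is not a position, so `J_{n,j}` is the standard
basis vector `e_{n−j}`), and all other entries `0`. -/
def Jvec (n : ℕ) (χ : Fin (n + 1) → ℕ) (i j : ℕ) : Fin n → ℤ :=
  fun k =>
    if (k : ℕ) + 1 = n - j then 1
    else if (k : ℕ) + 1 = n - i then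
      -(((χ ⟨n - j, Nat.lt_succ_of_le (Nat.sub_le n j)⟩ : ℕ) /
          (χ ⟨n - i, Nat.lt_succ_of_le (Nat.sub_le n i)⟩ : ℕ) : ℕ) : ℤ)
    else 0


/-- The top `r`-level of a product of nonzero elements is attained. -/
lemma myTop {n : ℕ} (r : (Fin n → ℤ) →+ ℤ) {f g : AddMonoidAlgebra ℤ (Fin n → ℤ)}
    (hf : f ≠ 0) (hg : g ≠ 0) :
    ∃ P ∈ (f * g).coeff.support, r P =
      f.coeff.support.sup' (Finsupp.support_nonempty_iff.mpr (mt AddMonoidAlgebra.coeff_eq_zero.mp hf)) r +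
      g.coeff.support.sup' (Finsupp.support_nonempty_iff.mpr (mt AddMonoidAlgebra.coeff_eq_zero.mp hg)) r := by
  classical
  set Mf := f.coeff.support.sup' (Finsupp.support_nonempty_iff.mpr (mt AddMonoidAlgebra.coeff_eq_zero.mp hf)) r with hMf
  set Mg := g.coeff.support.sup' (Finsupp.support_nonempty_iff.mpr (mt AddMonoidAlgebra.coeff_eq_zero.mp hg)) r with hMg
  set ft : AddMonoidAlgebra ℤ (Fin n → ℤ) := AddMonoidAlgebra.ofCoeff (Finsupp.filter (fun K => r K = Mf) f.coeff) with hft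
  set gt : AddMonoidAlgebra ℤ (Fin n → ℤ) := AddMonoidAlgebra.ofCoeff (Finsupp.filter (fun K => r K = Mg) g.coeff) with hgt
  set fr : AddMonoidAlgebra ℤ (Fin n → ℤ) := AddMonoidAlgebra.ofCoeff (Finsupp.filter (fun K => ¬ r K = Mf) f.coeff) with hfr
  set gr : AddMonoidAlgebra ℤ (Fin n → ℤ) := AddMonoidAlgebra.ofCoeff (Finsupp.filter (fun K => ¬ r K = Mg) g.coeff) with hgr
  obtain ⟨K₀, hK₀, hK₀eq⟩ := Finset.exists_mem_eq_sup' (Finsupp.support_nonempty_iff.mpr (mt AddMonoidAlgebra.coeff_eq_zero.mp hf)) r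
  obtain ⟨L₀, hL₀, hL₀eq⟩ := Finset.exists_mem_eq_sup' (Finsupp.support_nonempty_iff.mpr (mt AddMonoidAlgebra.coeff_eq_zero.mp hg)) r
  have hftne : ft ≠ 0 := by
    rw [Ne, ← AddMonoidAlgebra.coeff_eq_zero]
    apply Finsupp.support_nonempty_iff.mp
    refine ⟨K₀, ?_⟩
    rw [hft, AddMonoidAlgebra.coeff_ofCoeff, Finsupp.support_filter, Finset.mem_filter]
    exact ⟨hK₀, hK₀eq.symm⟩
  have hgtne : gt ≠ 0 := by
    rw [Ne, ← AddMonoidAlgebra.coeff_eq_zero]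
    apply Finsupp.support_nonempty_iff.mp
    refine ⟨L₀, ?_⟩
    rw [hgt, AddMonoidAlgebra.coeff_ofCoeff, Finsupp.support_filter, Finset.mem_filter]
    exact ⟨hL₀, hL₀eq.symm⟩
  have hprod : ft * gt ≠ 0 := mul_ne_zero hftne hgtne
  obtain ⟨P, hP⟩ := (Finsupp.support_nonempty_iff.mpr (mt AddMonoidAlgebra.coeff_eq_zero.mp hprod))
  obtain ⟨K₁, h1, K₂, h2, hsum⟩ := Finset.mem_add.mp (AddMonoidAlgebra.support_coeff_mul_subset _ _ hP)
  rw [hft, AddMonoidAlgebra.coeff_ofCoeff, Finsupp.support_filter, Finset.mem_filter] at h1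
  rw [hgt, AddMonoidAlgebra.coeff_ofCoeff, Finsupp.support_filter, Finset.mem_filter] at h2
  have hrP : r P = Mf + Mg := by rw [← hsum, map_add, h1.2, h2.2]
  refine ⟨P, ?_, hrP⟩
  have hA1 : (fr * g).coeff P = 0 := by
    rw [← Finsupp.notMem_support_iff]
    intro hPm
    obtain ⟨L₁, m1, L₂, m2, msum⟩ := Finset.mem_add.mp (AddMonoidAlgebra.support_coeff_mul_subset _ _ hPm)
    rw [hfr, AddMonoidAlgebra.coeff_ofCoeff, Finsupp.support_filter, Finset.mem_filter] at m1
    have l1 : r L₁ < Mf := lt_of_le_of_ne (Finset.le_sup' (r : (Fin n → ℤ) → ℤ) m1.1) m1.2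
    have l2 : r L₂ ≤ Mg := Finset.le_sup' (r : (Fin n → ℤ) → ℤ) m2
    have : r P = r L₁ + r L₂ := by rw [← msum, map_add]
    omega
  have hA2 : (ft * gr).coeff P = 0 := by
    rw [← Finsupp.notMem_support_iff]
    intro hPm
    obtain ⟨L₁, m1, L₂, m2, msum⟩ := Finset.mem_add.mp (AddMonoidAlgebra.support_coeff_mul_subset _ _ hPm)
    rw [hft, AddMonoidAlgebra.coeff_ofCoeff, Finsupp.support_filter, Finset.mem_filter] at m1
    rw [hgr, AddMonoidAlgebra.coeff_ofCoeff, Finsupp.support_filter, Finset.mem_filter] at m2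
    have l1 : r L₁ ≤ Mf := Finset.le_sup' (r : (Fin n → ℤ) → ℤ) m1.1
    have l2 : r L₂ < Mg := lt_of_le_of_ne (Finset.le_sup' (r : (Fin n → ℤ) → ℤ) m2.1) m2.2
    have : r P = r L₁ + r L₂ := by rw [← msum, map_add]
    omega
  have hsplitf : ft + fr = f := AddMonoidAlgebra.coeff_injective (Finsupp.filter_pos_add_filter_neg f.coeff _)
  have hsplitg : gt + gr = g := AddMonoidAlgebra.coeff_injective (Finsupp.filter_pos_add_filter_neg g.coeff _)
  have hmulsplit : f * g = ft * gt + (ft * gr + fr * g) := by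
    rw [← hsplitf, ← hsplitg]
    ring
  have hcoeff : (f * g).coeff P = (ft * gt).coeff P := by
    rw [hmulsplit, AddMonoidAlgebra.coeff_add, AddMonoidAlgebra.coeff_add, Finsupp.add_apply, Finsupp.add_apply, hA1, hA2, add_zero, add_zero]
  rw [Finsupp.mem_support_iff, hcoeff]
  exact Finsupp.mem_support_iff.mp hP

/-- If `d * e = h` and `r` vanishes on the support of `h`, then `r` is constant
on the support of `d`. -/
lemma myConst {n : ℕ} (r : (Fin n → ℤ) →+ ℤ) {d e h : AddMonoidAlgebra ℤ (Fin n → ℤ)}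
    (hd : d ≠ 0) (he : e ≠ 0) (hmul : d * e = h)
    (hh : ∀ P ∈ h.coeff.support, r P = 0) :
    ∀ K ∈ d.coeff.support, ∀ K' ∈ d.coeff.support, r K = r K' := by
  obtain ⟨P, hP, hPr⟩ := myTop r hd he
  obtain ⟨Q, hQ, hQr⟩ := myTop (-r) hd he
  rw [hmul] at hP hQ
  have h1 : d.coeff.support.sup' (Finsupp.support_nonempty_iff.mpr (mt AddMonoidAlgebra.coeff_eq_zero.mp hd)) r
      + e.coeff.support.sup' (Finsupp.support_nonempty_iff.mpr (mt AddMonoidAlgebra.coeff_eq_zero.mp he)) r = 0 := by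
    rw [← hPr]; exact hh P hP
  have h2 : d.coeff.support.sup' (Finsupp.support_nonempty_iff.mpr (mt AddMonoidAlgebra.coeff_eq_zero.mp hd)) (-r)
      + e.coeff.support.sup' (Finsupp.support_nonempty_iff.mpr (mt AddMonoidAlgebra.coeff_eq_zero.mp he)) (-r) = 0 := by
    rw [← hQr]
    have := hh Q hQ
    simp [this]
  obtain ⟨L, hL⟩ := (Finsupp.support_nonempty_iff.mpr (mt AddMonoidAlgebra.coeff_eq_zero.mp he))
  intro K hK K' hK'
  have a1 : r K ≤ _ := Finset.le_sup' (r : (Fin n → ℤ) → ℤ) hK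
  have a2 : r K' ≤ _ := Finset.le_sup' (r : (Fin n → ℤ) → ℤ) hK'
  have a3 : -(r K) ≤ _ := Finset.le_sup' ((-r : (Fin n → ℤ) →+ ℤ) : (Fin n → ℤ) → ℤ) hK
  have a4 : -(r K') ≤ _ := Finset.le_sup' ((-r : (Fin n → ℤ) →+ ℤ) : (Fin n → ℤ) → ℤ) hK'
  have a5 : r L ≤ _ := Finset.le_sup' (r : (Fin n → ℤ) → ℤ) hL
  have a6 : -(r L) ≤ _ := Finset.le_sup' ((-r : (Fin n → ℤ) →+ ℤ) : (Fin n → ℤ) → ℤ) hL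
  linarith


lemma mySupp {n : ℕ} (W : Fin n → ℤ) (r : (Fin n → ℤ) →+ ℤ) (hW : r W = 0) :
    ∀ P ∈ ((1 : AddMonoidAlgebra ℤ (Fin n → ℤ)) - AddMonoidAlgebra.single W 1).coeff.support,
      r P = 0 := by
  classical
  intro P hP
  have hsub := Finsupp.support_sub (f := (1 : AddMonoidAlgebra ℤ (Fin n → ℤ)).coeff)
    (g := (AddMonoidAlgebra.single W 1).coeff) hP
  rcases Finset.mem_union.mp hsub with h | h
  · have : P ∈ ({(0 : Fin n → ℤ)} : Finset _) := by
      rw [AddMonoidAlgebra.one_def] at h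
      exact Finsupp.support_single_subset h
    rw [Finset.mem_singleton] at this
    rw [this, map_zero]
  · have : P ∈ ({W} : Finset _) := Finsupp.support_single_subset h
    rw [Finset.mem_singleton] at this
    rw [this, hW]

/-- For a normalized divisive weight vector `χ` and `1 ≤ i ≤ n`, the K-theoretic
equivariant Euler classes `1 − α^{J_{i,j}}` and `1 − α^{J_{i,j'}}` (for `j < j' < i`)
of the summands of the representation attached to the `2i`-cell of `ℙ(χ)` are
relatively prime in the Laurent polynomial ring `S^±_ℤ(α)`, realised as
`AddMonoidAlgebra ℤ (Fin n → ℤ)`, the monomial `α^J` being `AddMonoidAlgebra.single J 1`. -/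
theorem divisive_euler_classes_pairwise_relatively_prime
    (n : ℕ) (χ : Fin (n + 1) → ℕ) (hpos : ∀ j, 0 < χ j)
    (hdiv : ∀ j : Fin n, χ j.castSucc ∣ χ j.succ)
    (hnorm : ∀ j : Fin (n + 1), Finset.gcd (Finset.univ.erase j) χ = 1)
    (i j j' : ℕ) (hi1 : 1 ≤ i) (hin : i ≤ n) (hjj' : j < j') (hj'i : j' < i) :
    ∀ d : AddMonoidAlgebra ℤ (Fin n → ℤ),
      d ∣ (1 - AddMonoidAlgebra.single (Jvec n χ i j) 1) →
      d ∣ (1 - AddMonoidAlgebra.single (Jvec n χ i j') 1) → IsUnit d := by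
  classical
  intro d hdvJ hdvJ'
  set J := Jvec n χ i j with hJ
  set J' := Jvec n χ i j' with hJ'
  have hn : 0 < n := by omega
  set a : Fin n := ⟨n - 1 - j, by omega⟩ with ha
  set b : Fin n := ⟨n - 1 - j', by omega⟩ with hb
  have hJa : J a = 1 := by rw [hJ, Jvec]; rw [if_pos (by simp [ha]; omega)]
  have hJ'a : J' a = 0 := by
    rw [hJ', Jvec]; rw [if_neg (by simp [ha]; omega), if_neg (by simp [ha]; omega)]
  have hJb : J b = 0 := by
    rw [hJ, Jvec]; rw [if_neg (by simp [hb]; omega), if_neg (by simp [hb]; omega)]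
  have hJ'b : J' b = 1 := by rw [hJ', Jvec]; rw [if_pos (by simp [hb]; omega)]
  have hJ0 : J ≠ 0 := by
    intro h
    have := congrFun h a
    rw [hJa] at this
    simp at this
  have hJ'0 : J' ≠ 0 := by
    intro h
    have := congrFun h b
    rw [hJ'b] at this
    simp at this
  -- the Euler classes are nonzero
  have hcoeff : ∀ W : Fin n → ℤ, W ≠ 0 →
      (((1 : AddMonoidAlgebra ℤ (Fin n → ℤ)) - AddMonoidAlgebra.single W 1).coeff : (Fin n → ℤ) →₀ ℤ) 0 = 1 := by
    intro W hW
    rw [AddMonoidAlgebra.coeff_sub, Finsupp.sub_apply, AddMonoidAlgebra.one_def, AddMonoidAlgebra.coeff_single,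
      AddMonoidAlgebra.coeff_single, Finsupp.single_eq_same,
      Finsupp.single_eq_of_ne' hW, sub_zero]
  have h1J : (1 : AddMonoidAlgebra ℤ (Fin n → ℤ)) - AddMonoidAlgebra.single J 1 ≠ 0 := by
    intro h
    have := hcoeff J hJ0
    rw [h] at this
    simp at this
  have h1J' : (1 : AddMonoidAlgebra ℤ (Fin n → ℤ)) - AddMonoidAlgebra.single J' 1 ≠ 0 := by
    intro h
    have := hcoeff J' hJ'0
    rw [h] at this
    simp at this
  obtain ⟨e, heq⟩ := hdvJ
  obtain ⟨e', heq'⟩ := hdvJ'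
  have hd0 : d ≠ 0 := by rintro rfl; rw [zero_mul] at heq; exact h1J heq
  have he0 : e ≠ 0 := by rintro rfl; rw [mul_zero] at heq; exact h1J heq
  have he'0 : e' ≠ 0 := by rintro rfl; rw [mul_zero] at heq'; exact h1J' heq'
  -- the evaluation homomorphism at `b`
  set q : (Fin n → ℤ) →+ ℤ := Pi.evalAddMonoidHom (fun _ : Fin n => ℤ) b with hq
  have hqconst := myConst q hd0 he0 heq.symm (mySupp J q hJb)
  -- the support of d is a singleton
  have hsing : ∀ K ∈ d.coeff.support, ∀ K' ∈ d.coeff.support, K = K' := by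
    intro K hK K' hK'
    funext c
    set r1 : (Fin n → ℤ) →+ ℤ :=
      AddMonoidHom.mk' (fun K : Fin n → ℤ => K c - (J' c) * K b)
        (by intro x y; simp [Pi.add_apply]; ring) with hr1
    have hr1J' : r1 J' = 0 := by
      simp only [hr1, AddMonoidHom.mk'_apply, hJ'b, mul_one, sub_self]
    have h2 := myConst r1 hd0 he'0 heq'.symm (mySupp J' r1 hr1J') K hK K' hK'
    have h1 := hqconst K hK K' hK'
    simp only [hr1, AddMonoidHom.mk'_apply] at h2
    simp only [hq, Pi.evalAddMonoidHom_apply] at h1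
    rw [h1] at h2
    linarith
  obtain ⟨K₀, hK₀⟩ := (Finsupp.support_nonempty_iff.mpr (mt AddMonoidAlgebra.coeff_eq_zero.mp hd0))
  have hdsingle : d = AddMonoidAlgebra.single K₀ (d.coeff K₀) := by
    rw [← AddMonoidAlgebra.coeff_inj, AddMonoidAlgebra.coeff_single]
    apply (Finsupp.support_subset_singleton (a := K₀)).mp
    intro K hK
    rw [Finset.mem_singleton]
    exact hsing K hK K₀ hK₀
  -- the coefficient is a unit
  have hcoef0 : (d.coeff K₀) * e.coeff (-K₀ + 0) = 1 := by
    have h0 := congrArg (fun f : AddMonoidAlgebra ℤ (Fin n → ℤ) => f.coeff 0) heq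
    rw [hcoeff J hJ0] at h0
    rw [hdsingle, AddMonoidAlgebra.coeff_single_mul_apply] at h0
    exact h0.symm
  have hcunit : IsUnit (d.coeff K₀) := IsUnit.of_mul_eq_one _ hcoef0
  rw [Int.isUnit_iff] at hcunit
  rw [hdsingle]
  apply isUnit_iff_exists_inv.mpr
  refine ⟨AddMonoidAlgebra.single (-K₀) (d.coeff K₀), ?_⟩
  rw [AddMonoidAlgebra.single_mul_single, add_neg_cancel]
  have : d.coeff K₀ * d.coeff K₀ = 1 := by rcases hcunit with h | h <;> rw [h] <;> norm_num
  rw [this, ← AddMonoidAlgebra.one_def]
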